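/- For every multiple-access channel W on finite alphabets, the independent non-signaling assisted capacity region equals the independent non-signaling assisted sum-capacity region: C^{NS_SR}(W) = C_sum^{NS_SR}(W). -/

import Mathlib

open Finset Filter Topology

section Defs

variable {X1 X2 Y : Type*}

/-- The `n`-fold memoryless extension `W^{⊗n}` of a multiple-access channel `W`. -/
def macPow (n : ℕ) (W : X1 → X2 → Y → ℝ) :
    (Fin n → X1) → (Fin n → X2) → (Fin n → Y) → ℝ :=
  fun x1 x2 y => ∏ i, W (x1 i) (x2 i) (y i)

/-- A bipartite non-signaling box `P(x,j|i,y)` between one sender and the receiver,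
with `k` messages.  Arguments of `P` are in the order `x j i y`. -/
def IsNSBox1 {X Y : Type*} [Fintype X] [Fintype Y] (k : ℕ)
    (P : X → Fin k → Fin k → Y → ℝ) : Prop :=
  (∀ x j i y, 0 ≤ P x j i y) ∧
  (∀ i y, ∑ x, ∑ j, P x j i y = 1) ∧
  (∀ j i i' y, ∑ x, P x j i y = ∑ x, P x j i' y) ∧
  (∀ x i y y', ∑ j, P x j i y = ∑ j, P x j i y')

/-- `S^{NS_SR}(W,k1,k2)`: maximum joint success probability with independent
non-signaling assistance between each sender and the receiver. -/
noncomputable def SNSsr [Fintype X1] [Fintype X2] [Fintype Y]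
    (W : X1 → X2 → Y → ℝ) (k1 k2 : ℕ) : ℝ :=
  sSup {s : ℝ | ∃ (P1 : X1 → Fin k1 → Fin k1 → Y → ℝ) (P2 : X2 → Fin k2 → Fin k2 → Y → ℝ),
    IsNSBox1 k1 P1 ∧ IsNSBox1 k2 P2 ∧
    s = (1 / ((k1 : ℝ) * (k2 : ℝ))) * ∑ i1, ∑ i2, ∑ x1, ∑ x2, ∑ y,
      W x1 x2 y * P1 x1 i1 i1 y * P2 x2 i2 i2 y}

/-- `S_sum^{NS_SR}(W,k1,k2)`: maximum sum (averaged individual) success probability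
with independent non-signaling assistance between each sender and the receiver. -/
noncomputable def SNSsrSum [Fintype X1] [Fintype X2] [Fintype Y]
    (W : X1 → X2 → Y → ℝ) (k1 k2 : ℕ) : ℝ :=
  sSup {s : ℝ | ∃ (P1 : X1 → Fin k1 → Fin k1 → Y → ℝ) (P2 : X2 → Fin k2 → Fin k2 → Y → ℝ),
    IsNSBox1 k1 P1 ∧ IsNSBox1 k2 P2 ∧
    s = (1 / (2 * (k1 : ℝ) * (k2 : ℝ))) * ∑ i1, ∑ i2, ∑ x1, ∑ x2, ∑ y,
      W x1 x2 y *
        (P1 x1 i1 i1 y * ∑ j2, P2 x2 j2 i2 y + P2 x2 i2 i2 y * ∑ j1, P1 x1 j1 i1 y)}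

/-- `⌈2^{R n}⌉`, the number of messages at rate `R` for blocklength `n`. -/
noncomputable def nMsg (R : ℝ) (n : ℕ) : ℕ := ⌈(2 : ℝ) ^ (R * (n : ℝ))⌉₊

/-- The independent non-signaling assisted capacity region `C^{NS_SR}(W)`. -/
noncomputable def capacityRegionNSsr [Fintype X1] [Fintype X2] [Fintype Y]
    (W : X1 → X2 → Y → ℝ) : Set (ℝ × ℝ) :=
  closure {p : ℝ × ℝ |
    Tendsto (fun n : ℕ => SNSsr (macPow n W) (nMsg p.1 n) (nMsg p.2 n)) atTop (𝓝 1)}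

/-- The independent non-signaling assisted sum-capacity region `C_sum^{NS_SR}(W)`. -/
noncomputable def sumCapacityRegionNSsr [Fintype X1] [Fintype X2] [Fintype Y]
    (W : X1 → X2 → Y → ℝ) : Set (ℝ × ℝ) :=
  closure {p : ℝ × ℝ |
    Tendsto (fun n : ℕ => SNSsrSum (macPow n W) (nMsg p.1 n) (nMsg p.2 n)) atTop (𝓝 1)}

end Defs

section Aux

variable {A B C : Type*} [Fintype A] [Fintype B] [Fintype C]

private lemma total_mass (V : A → B → C → ℝ) (hV1 : ∀ a b, ∑ c, V a b c = 1)
    {k1 k2 : ℕ} {P1 : A → Fin k1 → Fin k1 → C → ℝ} {P2 : B → Fin k2 → Fin k2 → C → ℝ}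
    (h1 : IsNSBox1 k1 P1) (h2 : IsNSBox1 k2 P2) [Nonempty C] (i1 : Fin k1) (i2 : Fin k2) :
    ∑ x1, ∑ x2, ∑ y, V x1 x2 y * ((∑ j1, P1 x1 j1 i1 y) * (∑ j2, P2 x2 j2 i2 y)) = 1 := by
  obtain ⟨y0⟩ := ‹Nonempty C›
  have e : ∀ x1 x2, ∑ y, V x1 x2 y * ((∑ j1, P1 x1 j1 i1 y) * (∑ j2, P2 x2 j2 i2 y))
      = (∑ j1, P1 x1 j1 i1 y0) * (∑ j2, P2 x2 j2 i2 y0) := by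
    intro x1 x2
    have hy : ∀ y : C, V x1 x2 y * ((∑ j1, P1 x1 j1 i1 y) * (∑ j2, P2 x2 j2 i2 y))
        = ((∑ j1, P1 x1 j1 i1 y0) * (∑ j2, P2 x2 j2 i2 y0)) * V x1 x2 y := by
      intro y
      rw [h1.2.2.2 x1 i1 y y0, h2.2.2.2 x2 i2 y y0]; ring
    rw [Finset.sum_congr rfl fun y _ => hy y, ← Finset.mul_sum, hV1, mul_one]
  rw [Finset.sum_congr rfl fun x1 _ => Finset.sum_congr rfl fun x2 _ => e x1 x2,
    ← Finset.sum_mul_sum, h1.2.1, h2.2.1, one_mul]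

private lemma per_pair (V : A → B → C → ℝ) (hV0 : ∀ a b c, 0 ≤ V a b c)
    (hV1 : ∀ a b, ∑ c, V a b c = 1)
    {k1 k2 : ℕ} {P1 : A → Fin k1 → Fin k1 → C → ℝ} {P2 : B → Fin k2 → Fin k2 → C → ℝ}
    (h1 : IsNSBox1 k1 P1) (h2 : IsNSBox1 k2 P2) [Nonempty C] (i1 : Fin k1) (i2 : Fin k2) :
    (0 ≤ ∑ x1, ∑ x2, ∑ y, V x1 x2 y * P1 x1 i1 i1 y * P2 x2 i2 i2 y) ∧
    2 * (∑ x1, ∑ x2, ∑ y, V x1 x2 y * P1 x1 i1 i1 y * P2 x2 i2 i2 y) ≤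
      (∑ x1, ∑ x2, ∑ y, V x1 x2 y *
        (P1 x1 i1 i1 y * ∑ j2, P2 x2 j2 i2 y + P2 x2 i2 i2 y * ∑ j1, P1 x1 j1 i1 y)) ∧
    (∑ x1, ∑ x2, ∑ y, V x1 x2 y *
        (P1 x1 i1 i1 y * ∑ j2, P2 x2 j2 i2 y + P2 x2 i2 i2 y * ∑ j1, P1 x1 j1 i1 y)) ≤
      1 + ∑ x1, ∑ x2, ∑ y, V x1 x2 y * P1 x1 i1 i1 y * P2 x2 i2 i2 y := by
  have key : ∀ (x1 : A) (x2 : B) (y : C),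
      2 * (V x1 x2 y * P1 x1 i1 i1 y * P2 x2 i2 i2 y) ≤
        V x1 x2 y * (P1 x1 i1 i1 y * ∑ j2, P2 x2 j2 i2 y
          + P2 x2 i2 i2 y * ∑ j1, P1 x1 j1 i1 y) ∧
      V x1 x2 y * (P1 x1 i1 i1 y * ∑ j2, P2 x2 j2 i2 y
          + P2 x2 i2 i2 y * ∑ j1, P1 x1 j1 i1 y) ≤
        V x1 x2 y * ((∑ j1, P1 x1 j1 i1 y) * (∑ j2, P2 x2 j2 i2 y))
          + V x1 x2 y * P1 x1 i1 i1 y * P2 x2 i2 i2 y := by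
    intro x1 x2 y
    set a := P1 x1 i1 i1 y with ha
    set b := P2 x2 i2 i2 y with hb
    set s1 := ∑ j1, P1 x1 j1 i1 y with hs1
    set s2 := ∑ j2, P2 x2 j2 i2 y with hs2
    have ha0 : 0 ≤ a := h1.1 x1 i1 i1 y
    have hb0 : 0 ≤ b := h2.1 x2 i2 i2 y
    have has1 : a ≤ s1 := Finset.single_le_sum (fun j _ => h1.1 x1 j i1 y) (Finset.mem_univ i1)
    have hbs2 : b ≤ s2 := Finset.single_le_sum (fun j _ => h2.1 x2 j i2 y) (Finset.mem_univ i2)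
    have hv : 0 ≤ V x1 x2 y := hV0 x1 x2 y
    constructor
    · have h' : 2 * (a * b) ≤ a * s2 + b * s1 := by nlinarith
      nlinarith [mul_le_mul_of_nonneg_left h' hv]
    · have h' : a * s2 + b * s1 ≤ s1 * s2 + a * b := by nlinarith [mul_nonneg (sub_nonneg.2 has1) (sub_nonneg.2 hbs2)]
      nlinarith [mul_le_mul_of_nonneg_left h' hv]
  refine ⟨?_, ?_, ?_⟩
  · exact Finset.sum_nonneg fun x1 _ => Finset.sum_nonneg fun x2 _ =>
      Finset.sum_nonneg fun y _ => mul_nonneg (mul_nonneg (hV0 x1 x2 y) (h1.1 x1 i1 i1 y)) (h2.1 x2 i2 i2 y)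
  · calc 2 * (∑ x1, ∑ x2, ∑ y, V x1 x2 y * P1 x1 i1 i1 y * P2 x2 i2 i2 y)
        = ∑ x1, ∑ x2, ∑ y, 2 * (V x1 x2 y * P1 x1 i1 i1 y * P2 x2 i2 i2 y) := by
          simp_rw [Finset.mul_sum]
      _ ≤ ∑ x1, ∑ x2, ∑ y, V x1 x2 y *
            (P1 x1 i1 i1 y * ∑ j2, P2 x2 j2 i2 y + P2 x2 i2 i2 y * ∑ j1, P1 x1 j1 i1 y) :=
          Finset.sum_le_sum fun x1 _ => Finset.sum_le_sum fun x2 _ =>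
            Finset.sum_le_sum fun y _ => (key x1 x2 y).1
  · calc (∑ x1, ∑ x2, ∑ y, V x1 x2 y *
            (P1 x1 i1 i1 y * ∑ j2, P2 x2 j2 i2 y + P2 x2 i2 i2 y * ∑ j1, P1 x1 j1 i1 y))
        ≤ ∑ x1, ∑ x2, ∑ y, (V x1 x2 y * ((∑ j1, P1 x1 j1 i1 y) * (∑ j2, P2 x2 j2 i2 y))
            + V x1 x2 y * P1 x1 i1 i1 y * P2 x2 i2 i2 y) :=
          Finset.sum_le_sum fun x1 _ => Finset.sum_le_sum fun x2 _ =>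
            Finset.sum_le_sum fun y _ => (key x1 x2 y).2
      _ = (∑ x1, ∑ x2, ∑ y, V x1 x2 y * ((∑ j1, P1 x1 j1 i1 y) * (∑ j2, P2 x2 j2 i2 y)))
            + ∑ x1, ∑ x2, ∑ y, V x1 x2 y * P1 x1 i1 i1 y * P2 x2 i2 i2 y := by
          simp_rw [Finset.sum_add_distrib]
      _ = 1 + ∑ x1, ∑ x2, ∑ y, V x1 x2 y * P1 x1 i1 i1 y * P2 x2 i2 i2 y := by
          rw [total_mass V hV1 h1 h2 i1 i2]

private lemma uniform_box {X : Type*} [Fintype X] [Nonempty X] {k : ℕ} (hk : 0 < k) :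
    IsNSBox1 k (fun (_ : X) (_ : Fin k) (_ : Fin k) (_ : C) => ((Fintype.card X : ℝ) * k)⁻¹) := by
  have hc : (0:ℝ) < (Fintype.card X : ℝ) * k := by
    have := Fintype.card_pos (α := X)
    positivity
  refine ⟨fun _ _ _ _ => by positivity, fun i y => ?_, fun _ _ _ _ => rfl, fun _ _ _ _ => rfl⟩
  simp only [Finset.sum_const, Finset.card_univ, Fintype.card_fin, nsmul_eq_mul]
  field_simp

private lemma box_vals (V : A → B → C → ℝ) (hV0 : ∀ a b c, 0 ≤ V a b c)
    (hV1 : ∀ a b, ∑ c, V a b c = 1) [Nonempty C]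
    {k1 k2 : ℕ} {P1 : A → Fin k1 → Fin k1 → C → ℝ} {P2 : B → Fin k2 → Fin k2 → C → ℝ}
    (h1 : IsNSBox1 k1 P1) (h2 : IsNSBox1 k2 P2) (hk1 : 0 < k1) (hk2 : 0 < k2) :
    (1 / ((k1 : ℝ) * (k2 : ℝ))) * (∑ i1, ∑ i2, ∑ x1, ∑ x2, ∑ y,
        V x1 x2 y * P1 x1 i1 i1 y * P2 x2 i2 i2 y) ≤
      (1 / (2 * (k1 : ℝ) * (k2 : ℝ))) * ∑ i1, ∑ i2, ∑ x1, ∑ x2, ∑ y,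
        V x1 x2 y *
          (P1 x1 i1 i1 y * ∑ j2, P2 x2 j2 i2 y + P2 x2 i2 i2 y * ∑ j1, P1 x1 j1 i1 y) ∧
    (1 / (2 * (k1 : ℝ) * (k2 : ℝ))) * (∑ i1, ∑ i2, ∑ x1, ∑ x2, ∑ y,
        V x1 x2 y *
          (P1 x1 i1 i1 y * ∑ j2, P2 x2 j2 i2 y + P2 x2 i2 i2 y * ∑ j1, P1 x1 j1 i1 y)) ≤
      (1 + (1 / ((k1 : ℝ) * (k2 : ℝ))) * ∑ i1, ∑ i2, ∑ x1, ∑ x2, ∑ y,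
        V x1 x2 y * P1 x1 i1 i1 y * P2 x2 i2 i2 y) / 2 := by
  set ST := ∑ i1, ∑ i2, ∑ x1, ∑ x2, ∑ y, V x1 x2 y * P1 x1 i1 i1 y * P2 x2 i2 i2 y with hST
  set SAB := ∑ i1, ∑ i2, ∑ x1, ∑ x2, ∑ y, V x1 x2 y *
      (P1 x1 i1 i1 y * ∑ j2, P2 x2 j2 i2 y + P2 x2 i2 i2 y * ∑ j1, P1 x1 j1 i1 y) with hSAB
  have h2T : 2 * ST ≤ SAB := by
    have e : 2 * ST = ∑ i1, ∑ i2, 2 * (∑ x1, ∑ x2, ∑ y,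
        V x1 x2 y * P1 x1 i1 i1 y * P2 x2 i2 i2 y) := by
      rw [hST, Finset.mul_sum]
      exact Finset.sum_congr rfl fun i1 _ => Finset.mul_sum _ _ _
    rw [e, hSAB]
    exact Finset.sum_le_sum fun i1 _ => Finset.sum_le_sum fun i2 _ =>
      (per_pair V hV0 hV1 h1 h2 i1 i2).2.1
  have hup : SAB ≤ (k1 : ℝ) * k2 + ST := by
    rw [hSAB, hST]
    calc (∑ i1 : Fin k1, ∑ i2 : Fin k2, ∑ x1, ∑ x2, ∑ y, V x1 x2 y *
          (P1 x1 i1 i1 y * ∑ j2, P2 x2 j2 i2 y + P2 x2 i2 i2 y * ∑ j1, P1 x1 j1 i1 y))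
        ≤ ∑ i1 : Fin k1, ∑ i2 : Fin k2,
            (1 + ∑ x1, ∑ x2, ∑ y, V x1 x2 y * P1 x1 i1 i1 y * P2 x2 i2 i2 y) :=
          Finset.sum_le_sum fun i1 _ => Finset.sum_le_sum fun i2 _ =>
            (per_pair V hV0 hV1 h1 h2 i1 i2).2.2
      _ = (k1 : ℝ) * k2 + ∑ i1, ∑ i2, ∑ x1, ∑ x2, ∑ y,
            V x1 x2 y * P1 x1 i1 i1 y * P2 x2 i2 i2 y := by
          simp only [Finset.sum_add_distrib]
          congr 1
          simp
  have hk1' : (0:ℝ) < k1 := by exact_mod_cast hk1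
  have hk2' : (0:ℝ) < k2 := by exact_mod_cast hk2
  constructor
  · have heq : (1 / ((k1:ℝ) * k2)) * ST = (1 / (2 * (k1:ℝ) * k2)) * (2 * ST) := by
      field_simp
    rw [heq]
    exact mul_le_mul_of_nonneg_left h2T (by positivity)
  · have hle : (1 / (2 * (k1:ℝ) * k2)) * SAB ≤ (1 / (2 * (k1:ℝ) * k2)) * ((k1:ℝ) * k2 + ST) :=
      mul_le_mul_of_nonneg_left hup (by positivity)
    have heq : (1 / (2 * (k1:ℝ) * k2)) * ((k1:ℝ) * k2 + ST)
        = (1 + (1 / ((k1:ℝ) * k2)) * ST) / 2 := by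
      have hK : (k1:ℝ) * k2 ≠ 0 := by positivity
      rw [eq_div_iff (by norm_num : (2:ℝ) ≠ 0), div_mul_eq_mul_div, div_mul_eq_mul_div,
        div_mul_eq_mul_div]
      field_simp
    linarith

private lemma sup_bounds (V : A → B → C → ℝ) (hV0 : ∀ a b c, 0 ≤ V a b c)
    (hV1 : ∀ a b, ∑ c, V a b c = 1) [Nonempty A] [Nonempty B] [Nonempty C]
    {k1 k2 : ℕ} (hk1 : 0 < k1) (hk2 : 0 < k2) :
    SNSsr V k1 k2 ≤ SNSsrSum V k1 k2 ∧
    SNSsrSum V k1 k2 ≤ (1 + SNSsr V k1 k2) / 2 ∧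
    SNSsr V k1 k2 ≤ 1 ∧ SNSsrSum V k1 k2 ≤ 1 := by
  classical
  set JS := {s : ℝ | ∃ (P1 : A → Fin k1 → Fin k1 → C → ℝ) (P2 : B → Fin k2 → Fin k2 → C → ℝ),
      IsNSBox1 k1 P1 ∧ IsNSBox1 k2 P2 ∧
      s = (1 / ((k1 : ℝ) * (k2 : ℝ))) * ∑ i1, ∑ i2, ∑ x1, ∑ x2, ∑ y,
        V x1 x2 y * P1 x1 i1 i1 y * P2 x2 i2 i2 y} with hJS
  set SS := {s : ℝ | ∃ (P1 : A → Fin k1 → Fin k1 → C → ℝ) (P2 : B → Fin k2 → Fin k2 → C → ℝ),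
      IsNSBox1 k1 P1 ∧ IsNSBox1 k2 P2 ∧
      s = (1 / (2 * (k1 : ℝ) * (k2 : ℝ))) * ∑ i1, ∑ i2, ∑ x1, ∑ x2, ∑ y,
        V x1 x2 y *
          (P1 x1 i1 i1 y * ∑ j2, P2 x2 j2 i2 y + P2 x2 i2 i2 y * ∑ j1, P1 x1 j1 i1 y)} with hSS
  have hSJ : SNSsr V k1 k2 = sSup JS := rfl
  have hSSm : SNSsrSum V k1 k2 = sSup SS := rfl
  have hu1 : IsNSBox1 k1
      (fun (_ : A) (_ : Fin k1) (_ : Fin k1) (_ : C) => ((Fintype.card A : ℝ) * k1)⁻¹) :=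
    uniform_box hk1
  have hu2 : IsNSBox1 k2
      (fun (_ : B) (_ : Fin k2) (_ : Fin k2) (_ : C) => ((Fintype.card B : ℝ) * k2)⁻¹) :=
    uniform_box hk2
  have hJne : JS.Nonempty := ⟨_, _, _, hu1, hu2, rfl⟩
  have hSne : SS.Nonempty := ⟨_, _, _, hu1, hu2, rfl⟩
  have hJ1 : ∀ s ∈ JS, s ≤ 1 := by
    rintro s ⟨P1, P2, h1, h2, rfl⟩
    obtain ⟨ha, hb⟩ := box_vals V hV0 hV1 h1 h2 hk1 hk2
    linarith
  have hS1 : ∀ s ∈ SS, s ≤ 1 := by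
    rintro s ⟨P1, P2, h1, h2, rfl⟩
    obtain ⟨ha, hb⟩ := box_vals V hV0 hV1 h1 h2 hk1 hk2
    linarith
  have hbJ : BddAbove JS := ⟨1, fun s hs => hJ1 s hs⟩
  have hbS : BddAbove SS := ⟨1, fun s hs => hS1 s hs⟩
  refine ⟨?_, ?_, ?_, ?_⟩
  · rw [hSJ, hSSm]
    refine csSup_le hJne ?_
    rintro s ⟨P1, P2, h1, h2, rfl⟩
    obtain ⟨ha, hb⟩ := box_vals V hV0 hV1 h1 h2 hk1 hk2
    exact le_trans ha (le_csSup hbS ⟨P1, P2, h1, h2, rfl⟩)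
  · rw [hSJ, hSSm]
    refine csSup_le hSne ?_
    rintro s ⟨P1, P2, h1, h2, rfl⟩
    obtain ⟨ha, hb⟩ := box_vals V hV0 hV1 h1 h2 hk1 hk2
    have hmem : (1 / ((k1 : ℝ) * (k2 : ℝ))) * (∑ i1, ∑ i2, ∑ x1, ∑ x2, ∑ y,
        V x1 x2 y * P1 x1 i1 i1 y * P2 x2 i2 i2 y) ≤ sSup JS :=
      le_csSup hbJ ⟨P1, P2, h1, h2, rfl⟩
    linarith
  · rw [hSJ]; exact csSup_le hJne hJ1
  · rw [hSSm]; exact csSup_le hSne hS1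

private lemma sSup_zero_of_forall_zero {S : Set ℝ} (h : ∀ x ∈ S, x = 0) : sSup S = 0 := by
  rcases Set.eq_empty_or_nonempty S with h0 | hne
  · rw [h0]; exact Real.sSup_empty
  · rw [hne.subset_singleton_iff.1 fun x hx => h x hx]
    exact csSup_singleton 0

private lemma no_box_of_isEmpty {X : Type*} [Fintype X] {k : ℕ}
    {P : X → Fin k → Fin k → C → ℝ} [Nonempty C]
    (hk : 0 < k) (hX : IsEmpty X) (h : IsNSBox1 k P) : False := by
  have := h.2.1 ⟨0, hk⟩ (Classical.arbitrary C)
  rw [Finset.univ_eq_empty, Finset.sum_empty] at this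
  exact zero_ne_one this

private lemma degenerate_zero (V : A → B → C → ℝ)
    (hdeg : IsEmpty A ∨ IsEmpty B ∨ IsEmpty C) {k1 k2 : ℕ} (hk1 : 0 < k1) (hk2 : 0 < k2) :
    SNSsr V k1 k2 = 0 ∧ SNSsrSum V k1 k2 = 0 := by
  by_cases hC : Nonempty C
  · have hAB : IsEmpty A ∨ IsEmpty B := by
      rcases hdeg with h | h | h
      · exact Or.inl h
      · exact Or.inr h
      · exact absurd hC (not_nonempty_iff.2 h)
    constructor
    · apply sSup_zero_of_forall_zero
      rintro s ⟨P1, P2, h1, h2, rfl⟩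
      rcases hAB with h | h
      · exact (no_box_of_isEmpty hk1 h h1).elim
      · exact (no_box_of_isEmpty hk2 h h2).elim
    · apply sSup_zero_of_forall_zero
      rintro s ⟨P1, P2, h1, h2, rfl⟩
      rcases hAB with h | h
      · exact (no_box_of_isEmpty hk1 h h1).elim
      · exact (no_box_of_isEmpty hk2 h h2).elim
  · have hCE : IsEmpty C := not_nonempty_iff.1 hC
    constructor
    · apply sSup_zero_of_forall_zero
      rintro s ⟨P1, P2, h1, h2, rfl⟩
      simp
    · apply sSup_zero_of_forall_zero
      rintro s ⟨P1, P2, h1, h2, rfl⟩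
      simp

private lemma not_tendsto_one {f : ℕ → ℝ} (h0 : ∀ n, 1 ≤ n → f n = 0) :
    ¬ Filter.Tendsto f Filter.atTop (𝓝 1) := by
  intro h
  have he : f =ᶠ[Filter.atTop] fun _ => (0 : ℝ) := Filter.eventually_atTop.2 ⟨1, h0⟩
  exact one_ne_zero (tendsto_nhds_unique (h.congr' he) tendsto_const_nhds)

end Aux

/-- For every MAC `W` on finite alphabets, the independent non-signaling assisted
capacity region equals the independent non-signaling assisted sum-capacity region:
`C^{NS_SR}(W) = C_sum^{NS_SR}(W)`. -/
theorem capacityRegionNSsr_eq_sumCapacityRegionNSsr {X1 X2 Y : Type*}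
    [Fintype X1] [Fintype X2] [Fintype Y]
    (W : X1 → X2 → Y → ℝ)
    (hW0 : ∀ x1 x2 y, 0 ≤ W x1 x2 y)
    (hW1 : ∀ x1 x2, ∑ y, W x1 x2 y = 1) :
    capacityRegionNSsr W = sumCapacityRegionNSsr W := by
  have hkpos : ∀ (R : ℝ) (n : ℕ), 0 < nMsg R n := fun R n =>
    Nat.ceil_pos.mpr (by positivity)
  suffices h : {p : ℝ × ℝ |
      Tendsto (fun n : ℕ => SNSsr (macPow n W) (nMsg p.1 n) (nMsg p.2 n)) atTop (𝓝 1)}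
      = {p : ℝ × ℝ |
      Tendsto (fun n : ℕ => SNSsrSum (macPow n W) (nMsg p.1 n) (nMsg p.2 n)) atTop (𝓝 1)} by
    unfold capacityRegionNSsr sumCapacityRegionNSsr
    rw [h]
  by_cases hdeg : Nonempty X1 ∧ Nonempty X2 ∧ Nonempty Y
  · obtain ⟨hX1, hX2, hY⟩ := hdeg
    have hp0 : ∀ (n : ℕ) (x1 : Fin n → X1) (x2 : Fin n → X2) (y : Fin n → Y),
        0 ≤ macPow n W x1 x2 y := fun n x1 x2 y =>
      Finset.prod_nonneg fun i _ => hW0 _ _ _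
    have hp1 : ∀ (n : ℕ) (x1 : Fin n → X1) (x2 : Fin n → X2),
        ∑ y, macPow n W x1 x2 y = 1 := by
      intro n x1 x2
      show ∑ y : Fin n → Y, ∏ i, W (x1 i) (x2 i) (y i) = 1
      rw [show (Finset.univ : Finset (Fin n → Y)) = Fintype.piFinset (fun _ => Finset.univ)
          from Fintype.piFinset_univ.symm, ← Finset.prod_univ_sum]
      simp [hW1]
    have bounds : ∀ (p : ℝ × ℝ) (n : ℕ),
        SNSsr (macPow n W) (nMsg p.1 n) (nMsg p.2 n) ≤
          SNSsrSum (macPow n W) (nMsg p.1 n) (nMsg p.2 n) ∧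
        SNSsrSum (macPow n W) (nMsg p.1 n) (nMsg p.2 n) ≤
          (1 + SNSsr (macPow n W) (nMsg p.1 n) (nMsg p.2 n)) / 2 ∧
        SNSsr (macPow n W) (nMsg p.1 n) (nMsg p.2 n) ≤ 1 ∧
        SNSsrSum (macPow n W) (nMsg p.1 n) (nMsg p.2 n) ≤ 1 := by
      intro p n
      haveI : Nonempty (Fin n → X1) := ⟨fun _ => Classical.arbitrary X1⟩
      haveI : Nonempty (Fin n → X2) := ⟨fun _ => Classical.arbitrary X2⟩
      haveI : Nonempty (Fin n → Y) := ⟨fun _ => Classical.arbitrary Y⟩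
      exact sup_bounds (macPow n W) (hp0 n) (hp1 n) (hkpos p.1 n) (hkpos p.2 n)
    ext p
    simp only [Set.mem_setOf_eq]
    constructor
    · intro h
      exact tendsto_of_tendsto_of_tendsto_of_le_of_le h tendsto_const_nhds
        (fun n => (bounds p n).1) (fun n => (bounds p n).2.2.2)
    · intro h
      have hlow : Tendsto
          (fun n => 2 * SNSsrSum (macPow n W) (nMsg p.1 n) (nMsg p.2 n) - 1) atTop (𝓝 1) := by
        have h2 := (h.const_mul (2:ℝ)).sub_const 1
        norm_num at h2
        exact h2
      exact tendsto_of_tendsto_of_tendsto_of_le_of_le hlow tendsto_const_nhds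
        (fun n => by have := (bounds p n).2.1; linarith)
        (fun n => (bounds p n).2.2.1)
  · have hd : ∀ n : ℕ, 1 ≤ n →
        IsEmpty (Fin n → X1) ∨ IsEmpty (Fin n → X2) ∨ IsEmpty (Fin n → Y) := by
      intro n hn
      have hi : Fin n := ⟨0, hn⟩
      rcases not_and_or.mp hdeg with h | h
      · exact Or.inl (isEmpty_pi.2 ⟨hi, not_nonempty_iff.1 h⟩)
      · rcases not_and_or.mp h with h' | h'
        · exact Or.inr (Or.inl (isEmpty_pi.2 ⟨hi, not_nonempty_iff.1 h'⟩))
        · exact Or.inr (Or.inr (isEmpty_pi.2 ⟨hi, not_nonempty_iff.1 h'⟩))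
    ext p
    simp only [Set.mem_setOf_eq]
    constructor
    · intro h
      exact absurd h (not_tendsto_one fun n hn =>
        (degenerate_zero (macPow n W) (hd n hn) (hkpos p.1 n) (hkpos p.2 n)).1)
    · intro h
      exact absurd h (not_tendsto_one fun n hn =>
        (degenerate_zero (macPow n W) (hd n hn) (hkpos p.1 n) (hkpos p.2 n)).2)
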